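/- Let m ≥ 1, n ≥ 0 be integers and a_{−n}, …, a_{m−1} ∈ ℂ such that the Laurent polynomial f(z) = ∑_{k=−n}^{m−1} a_k z^k has no zeros on the unit circle {z ∈ ℂ : |z| = 1}. Define β : ℤ → ℂ by β(d) = (1/(2πi)) ∮_{|z|=1} z^{−d−1}/f(z) dz (counterclockwise circle integral). Then for every integer d ∈ ℤ, ∑_{t=−n}^{m−1} a_t · β(d − t) = [d = 0] (1 if d = 0 and 0 otherwise). In other words, the biinfinite Toeplitz matrix with symbol 1/f is a right inverse of the biinfinite banded Toeplitz matrix with symbol f. -/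

import Mathlib

open Finset Metric

lemma circleIntegral_finset_sum {ι : Type*} (s : Finset ι) (g : ι → ℂ → ℂ) (c : ℂ) (R : ℝ)
    (h : ∀ i ∈ s, CircleIntegrable (g i) c R) :
    (∮ z in C(c, R), ∑ i ∈ s, g i z) = ∑ i ∈ s, ∮ z in C(c, R), g i z := by
  simp only [circleIntegral, Finset.smul_sum]
  exact intervalIntegral.integral_finset_sum fun i hi => (circleIntegrable_iff R).mp (h i hi)

/-- The biinfinite Toeplitz matrix with symbol `1/f` is a right inverse of the biinfinite
banded Toeplitz matrix with symbol `f`: here `f` is the Laurent polynomial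
`f(z) = ∑_{k=-n}^{m-1} a_k z^k` (without zeros on the unit circle) and
`β d = (1/(2πi)) ∮_{|z|=1} z^{-d-1}/f(z) dz`. -/
theorem stmt1 (m n : ℕ) (hm : 1 ≤ m) (a : ℤ → ℂ)
    (f : ℂ → ℂ)
    (hf : ∀ z : ℂ, f z = ∑ k ∈ Finset.Icc (-(n : ℤ)) ((m : ℤ) - 1), a k * z ^ k)
    (hroots : ∀ z : ℂ, ‖z‖ = 1 → f z ≠ 0)
    (β : ℤ → ℂ)
    (hβ : ∀ d : ℤ,
      β d = (2 * Real.pi * Complex.I : ℂ)⁻¹ * (∮ z in C(0, 1), z ^ (-d - 1) / f z)) :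
    ∀ d : ℤ,
      ∑ t ∈ Finset.Icc (-(n : ℤ)) ((m : ℤ) - 1), a t * β (d - t)
        = if d = 0 then 1 else 0 := by
  intro d
  set S := Finset.Icc (-(n : ℤ)) ((m : ℤ) - 1) with hS
  have hzne : ∀ z ∈ sphere (0 : ℂ) 1, z ≠ 0 := by
    intro z hz
    simp only [mem_sphere_iff_norm, sub_zero] at hz
    intro h; rw [h] at hz; simp at hz
  have habs : ∀ z ∈ sphere (0 : ℂ) 1, ‖z‖ = 1 := by
    intro z hz
    exact mem_sphere_zero_iff_norm.mp hz
  have hfc : ContinuousOn f (sphere (0 : ℂ) 1) := by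
    have : ContinuousOn (fun z : ℂ => ∑ k ∈ S, a k * z ^ k) (sphere (0 : ℂ) 1) := by
      apply continuousOn_finset_sum
      intro k _
      exact continuousOn_const.mul fun z hz =>
        (continuousAt_zpow₀ z k (Or.inl (hzne z hz))).continuousWithinAt
    exact this.congr fun z _ => hf z
  have hfne : ∀ z ∈ sphere (0 : ℂ) 1, f z ≠ 0 := fun z hz => hroots z (habs z hz)
  -- integrability of each term
  have hint : ∀ t ∈ S,
      CircleIntegrable (fun z : ℂ => a t * (z ^ (-(d - t) - 1) / f z)) 0 1 := by
    intro t _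
    apply ContinuousOn.circleIntegrable zero_le_one
    apply continuousOn_const.mul
    apply ContinuousOn.div _ hfc hfne
    exact fun z hz => (continuousAt_zpow₀ z _ (Or.inl (hzne z hz))).continuousWithinAt
  calc ∑ t ∈ S, a t * β (d - t)
      = (2 * Real.pi * Complex.I : ℂ)⁻¹ *
        ∑ t ∈ S, ∮ z in C(0, 1), a t * (z ^ (-(d - t) - 1) / f z) := by
        rw [Finset.mul_sum]
        refine Finset.sum_congr rfl fun t _ => ?_
        rw [hβ, ← mul_assoc, mul_comm (a t), mul_assoc]
        congr 1
        have := circleIntegral.integral_smul (𝕜 := ℂ)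
          (a t) (fun z => z ^ (-(d - t) - 1) / f z) 0 1
        simp only [smul_eq_mul] at this; exact this.symm
    _ = (2 * Real.pi * Complex.I : ℂ)⁻¹ *
        ∮ z in C(0, 1), ∑ t ∈ S, a t * (z ^ (-(d - t) - 1) / f z) := by
        rw [circleIntegral_finset_sum S _ 0 1 hint]
    _ = (2 * Real.pi * Complex.I : ℂ)⁻¹ * ∮ z in C(0, 1), (z - 0) ^ (-d - 1) := by
        congr 1
        apply circleIntegral.integral_congr zero_le_one
        intro z hz
        have hz0 := hzne z hz
        have hfz := hfne z hz
        have key : ∀ t : ℤ, z ^ (-(d - t) - 1) = z ^ t * z ^ (-d - 1) := by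
          intro t
          rw [← zpow_add₀ hz0]
          ring_nf
        simp only [key, sub_zero]
        calc ∑ t ∈ S, a t * (z ^ t * z ^ (-d - 1) / f z)
            = (∑ t ∈ S, a t * z ^ t) * (z ^ (-d - 1) / f z) := by
              rw [Finset.sum_mul]
              exact Finset.sum_congr rfl fun t _ => by ring
          _ = z ^ (-d - 1) := by
              rw [← hf z, mul_div_assoc', mul_comm, mul_div_assoc, div_self hfz, mul_one]
    _ = if d = 0 then 1 else 0 := by
        by_cases hd : d = 0
        · subst hd
          simp only [if_true]
          have : (∮ z in C(0, 1), (z - 0) ^ (-(0:ℤ) - 1)) = 2 * Real.pi * Complex.I := by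
            have h0 : (0 : ℂ) ∈ ball (0 : ℂ) 1 := by simp
            have := circleIntegral.integral_sub_inv_of_mem_ball h0
            simpa [zpow_neg_one] using this
          rw [this, inv_mul_cancel₀]
          simp [Real.pi_ne_zero, Complex.I_ne_zero]
        · rw [circleIntegral.integral_sub_zpow_of_ne (by omega) 0 0 1]
          simp [hd]
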